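/- Let X be a Banach space, let v : (0,∞) → X be strongly measurable and Bochner integrable on every compact subset of (0,∞), and let N ⊂ (0,∞) be a set of Lebesgue measure zero. Then for every ε > 0 there exist sequences (t_k)_{k∈ℕ} in (0,∞) \ N and (r_k)_{k∈ℕ} of positive reals with r_k < t_k, such that: the closed intervals I_k = [t_k − r_k, t_k + r_k] are pairwise disjoint; each t_k is a Lebesgue point of v, i.e. lim_{h→0⁺} (1/(2h)) ∫_{t_k−h}^{t_k+h} ‖v(s) − v(t_k)‖ ds = 0; the set (0,∞) \ ⋃_{k∈ℕ} I_k has Lebesgue measure zero; and ∫_0^∞ ‖v(t) − v^ε(t)‖ dt ≤ ε, where v^ε(t) = v(t_k) for t ∈ I_k and v^ε(t) = 0 for t ∉ ⋃_{k∈ℕ} I_k. -/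

import Mathlib

open MeasureTheory Set Filter Metric

lemma leb_pts (X : Type*) [NormedAddCommGroup X]
    (v : ℝ → X)
    (hv : ∀ K : Set ℝ, K ⊆ Ioi 0 → IsCompact K → IntegrableOn v K volume) :
    volume {x ∈ Ioi (0:ℝ) | ¬ Tendsto
      (fun h : ℝ => (1 / (2 * h)) * ∫ s in Icc (x - h) (x + h), ‖v s - v x‖)
      (nhdsWithin 0 (Ioi 0)) (nhds 0)} = 0 := by
  set T : ℝ → Prop := fun x => Tendsto
      (fun h : ℝ => (1 / (2 * h)) * ∫ s in Icc (x - h) (x + h), ‖v s - v x‖)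
      (nhdsWithin 0 (Ioi 0)) (nhds 0) with hT
  have key : ∀ n : ℕ, volume {x ∈ Ioo (1/(n+1) : ℝ) (n+1) | ¬ T x} = 0 := by
    intro n
    set a : ℝ := 1/(n+2) with ha_def
    set b : ℝ := (n:ℝ)+2 with hb_def
    have ha : 0 < a := by positivity
    set w : ℝ → X := Set.indicator (Icc a b) v with hw_def
    have hwint : Integrable w volume := by
      refine IntegrableOn.integrable_indicator ?_ measurableSet_Icc
      exact hv (Icc a b) (fun y hy => lt_of_lt_of_le ha hy.1) isCompact_Icc
    have H := (Besicovitch.vitaliFamily (volume : Measure ℝ)).ae_tendsto_average_norm_sub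
      hwint.locallyIntegrable
    rw [ae_iff] at H
    refine measure_mono_null (fun x hx => ?_) H
    obtain ⟨hxmem, hxT⟩ := hx
    simp only [mem_setOf_eq]
    intro hP
    apply hxT
    have hP' : Tendsto (fun r => ⨍ y in closedBall x r, ‖w y - w x‖)
        (nhdsWithin 0 (Ioi 0)) (nhds 0) :=
      hP.comp (Besicovitch.tendsto_filterAt volume x)
    have hax : a < x := lt_trans (by
      rw [ha_def]
      apply one_div_lt_one_div_of_lt <;> push_cast <;> linarith) hxmem.1
    have hxb : x < b := lt_trans hxmem.2 (by rw [hb_def]; linarith)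
    have hxab : x ∈ Icc a b := ⟨hax.le, hxb.le⟩
    refine hP'.congr' ?_
    have hmem : Ioo (0:ℝ) (min (x - a) (b - x)) ∈ nhdsWithin (0:ℝ) (Ioi 0) :=
      Ioo_mem_nhdsGT_of_mem ⟨le_rfl, lt_min (by linarith) (by linarith)⟩
    filter_upwards [hmem] with r hr
    have hr0 : 0 < r := hr.1
    have hsub : Icc (x - r) (x + r) ⊆ Icc a b := by
      have h1 := lt_of_lt_of_le hr.2 (min_le_left _ _)
      have h2 := lt_of_lt_of_le hr.2 (min_le_right _ _)
      apply Icc_subset_Icc <;> linarith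
    rw [setAverage_eq, Real.closedBall_eq_Icc]
    have hvol : volume (Icc (x - r) (x + r)) = ENNReal.ofReal (2 * r) := by
      rw [Real.volume_Icc]; ring_nf
    rw [measureReal_def, hvol, ENNReal.toReal_ofReal (by linarith)]
    have : ∫ y in Icc (x - r) (x + r), ‖w y - w x‖ =
        ∫ s in Icc (x - r) (x + r), ‖v s - v x‖ := by
      refine setIntegral_congr_fun measurableSet_Icc (fun y hy => ?_)
      rw [hw_def]
      simp only [indicator_of_mem (hsub hy), indicator_of_mem hxab]
    rw [this, smul_eq_mul, one_div]
  refine measure_mono_null (fun x hx => ?_) (measure_iUnion_null key)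
  obtain ⟨hx0, hxT⟩ := hx
  obtain ⟨n, hn⟩ := exists_nat_gt (max (1/x) x)
  refine mem_iUnion.2 ⟨n, ⟨?_, hxT⟩⟩
  have h1 : 1/x < n := lt_of_le_of_lt (le_max_left _ _) hn
  have h2 : x < n := lt_of_le_of_lt (le_max_right _ _) hn
  have hx0' : (0:ℝ) < x := hx0
  constructor
  · rw [div_lt_iff₀ (by positivity)] at h1 ⊢
    nlinarith
  · linarith


set_option maxHeartbeats 1000000 in
theorem stmt_1 (X : Type*) [NormedAddCommGroup X] [NormedSpace ℝ X] [CompleteSpace X]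
    (v : ℝ → X)
    (hvmeas : AEStronglyMeasurable v (volume.restrict (Ioi (0 : ℝ))))
    (hv : ∀ K : Set ℝ, K ⊆ Ioi 0 → IsCompact K → IntegrableOn v K volume)
    (N : Set ℝ) (hN : N ⊆ Ioi 0) (hNnull : volume N = 0) :
    ∀ ε : ℝ, 0 < ε →
      ∃ t r : ℕ → ℝ,
        (∀ k, t k ∈ Ioi 0 \ N) ∧
        (∀ k, 0 < r k ∧ r k < t k) ∧
        (∀ i j, i ≠ j →
          Disjoint (Icc (t i - r i) (t i + r i)) (Icc (t j - r j) (t j + r j))) ∧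
        (∀ k, Tendsto
          (fun h : ℝ => (1 / (2 * h)) * ∫ s in Icc (t k - h) (t k + h), ‖v s - v (t k)‖)
          (nhdsWithin 0 (Ioi 0)) (nhds 0)) ∧
        volume (Ioi 0 \ ⋃ k, Icc (t k - r k) (t k + r k)) = 0 ∧
        ∀ vε : ℝ → X,
          (∀ k, ∀ s ∈ Icc (t k - r k) (t k + r k), vε s = v (t k)) →
          (∀ s ∈ Ioi 0 \ ⋃ k, Icc (t k - r k) (t k + r k), vε s = 0) →
          (∫⁻ s in Ioi (0 : ℝ), (‖v s - vε s‖₊ : ENNReal) ∂volume) ≤ ENNReal.ofReal ε := by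
  intro ε hε
  set ε' : ℝ := ε / Real.pi with hε'_def
  have hε' : 0 < ε' := div_pos hε Real.pi_pos
  set T : ℝ → Prop := fun x => Tendsto
      (fun h : ℝ => (1 / (2 * h)) * ∫ s in Icc (x - h) (x + h), ‖v s - v x‖)
      (nhdsWithin 0 (Ioi 0)) (nhds 0) with hT_def
  set S : Set ℝ := {x ∈ Ioi (0:ℝ) \ N | T x} with hS_def
  have hScompl : volume (Ioi (0:ℝ) \ S) = 0 := by
    refine measure_mono_null (fun x hx => ?_)
      (measure_union_null hNnull (leb_pts X v hv))
    obtain ⟨hx0, hxS⟩ := hx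
    by_cases hxN : x ∈ N
    · exact Or.inl hxN
    · right
      refine ⟨hx0, fun hTx => hxS ⟨⟨hx0, hxN⟩, hTx⟩⟩
  -- admissible radii
  set f : ℝ → Set ℝ := fun x => {r : ℝ | 0 < r ∧ r < x ∧
      ∫ s in Icc (x - r) (x + r), ‖v s - v x‖ ≤ ε' * (1 + (2*x)^2)⁻¹ * (2*r)} with hf_def
  have hf : ∀ x ∈ S, ∀ δ > 0, (f x ∩ Ioo 0 δ).Nonempty := by
    intro x hx δ hδ
    obtain ⟨⟨hx0, _⟩, hxT⟩ := hx
    have hx0 : (0:ℝ) < x := hx0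
    have hc : 0 < ε' * (1 + (2*x)^2)⁻¹ := by positivity
    have h1 : ∀ᶠ r in nhdsWithin (0:ℝ) (Ioi 0),
        (1 / (2 * r)) * ∫ s in Icc (x - r) (x + r), ‖v s - v x‖ < ε' * (1 + (2*x)^2)⁻¹ :=
      hxT.eventually (Filter.Tendsto.eventually_lt_const hc tendsto_id) |>.mono (fun r hr => hr)
    have h2 : Ioo (0:ℝ) (min x δ) ∈ nhdsWithin (0:ℝ) (Ioi 0) :=
      Ioo_mem_nhdsGT_of_mem ⟨le_rfl, lt_min hx0 hδ⟩
    obtain ⟨r, hr1, hr2⟩ := (h1.and (eventually_of_mem h2 (fun r hr => hr))).exists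
    refine ⟨r, ⟨⟨hr2.1, lt_of_lt_of_le hr2.2 (min_le_left _ _), ?_⟩,
      ⟨hr2.1, lt_of_lt_of_le hr2.2 (min_le_right _ _)⟩⟩⟩
    have hr0 : 0 < r := hr2.1
    have := hr1
    rw [div_mul_eq_mul_div, one_mul, div_lt_iff₀ (by linarith)] at this
    linarith [this]
  obtain ⟨t0, r0, ht0count, ht0S, ht0f, ht0null, ht0disj⟩ :=
    Besicovitch.exists_disjoint_closedBall_covering_ae (volume : Measure ℝ) f S hf
      (fun _ => 1) (fun _ _ => one_pos)
  -- the covering set is infinite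
  have hSinf : volume S = ⊤ := by
    have h1 : volume (Ioi (0:ℝ)) ≤ volume S + volume (Ioi 0 \ S) :=
      le_trans (measure_mono (fun x hx => by
        by_cases h : x ∈ S
        · exact Or.inl h
        · exact Or.inr ⟨hx, h⟩)) (measure_union_le _ _)
    rw [hScompl, add_zero, Real.volume_Ioi] at h1
    exact top_le_iff.mp h1
  have ht0inf : t0.Infinite := by
    intro hfin
    have h1 : volume (⋃ x ∈ t0, closedBall x (r0 x)) < ⊤ :=
      measure_biUnion_lt_top hfin (fun x _ => by
        rw [Real.volume_closedBall]; exact ENNReal.ofReal_lt_top)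
    have h2 : volume S ≤ volume (⋃ x ∈ t0, closedBall x (r0 x)) +
        volume (S \ ⋃ x ∈ t0, closedBall x (r0 x)) :=
      le_trans (measure_mono (fun x hx => by
        by_cases h : x ∈ ⋃ x ∈ t0, closedBall x (r0 x)
        · exact Or.inl h
        · exact Or.inr ⟨hx, h⟩)) (measure_union_le _ _)
    rw [hSinf, ht0null, add_zero] at h2
    exact absurd (top_le_iff.mp h2) (ne_of_lt h1)
  have : Nonempty (Denumerable t0) :=
    Set.countable_infinite_iff_nonempty_denumerable.mp ⟨ht0count, ht0inf⟩
  obtain ⟨d⟩ := this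
  let e : ℕ → ↥t0 := (Denumerable.eqv ↥t0).symm
  have he : Function.Bijective e := (Denumerable.eqv ↥t0).symm.bijective
  set tk : ℕ → ℝ := fun k => ((e k : ↥t0) : ℝ) with htk_def
  set rk : ℕ → ℝ := fun k => r0 (tk k) with hrk_def
  have htk_mem : ∀ k, tk k ∈ t0 := fun k => (e k).2
  have hIcc : ∀ k, Icc (tk k - rk k) (tk k + rk k) = closedBall (tk k) (rk k) :=
    fun k => (Real.closedBall_eq_Icc).symm
  have hUnion : (⋃ k, Icc (tk k - rk k) (tk k + rk k)) = ⋃ x ∈ t0, closedBall x (r0 x) := by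
    simp_rw [hIcc]
    rw [← iUnion_subtype (fun x => x ∈ t0) (fun x => closedBall (x:ℝ) (r0 x))]
    exact Function.Surjective.iUnion_comp he.2 (fun x : ↥t0 => closedBall (x:ℝ) (r0 (x:ℝ)))
  have hfk : ∀ k, rk k ∈ f (tk k) := fun k => (ht0f _ (htk_mem k)).1
  refine ⟨tk, rk, fun k => (ht0S (htk_mem k)).1, fun k => ⟨(hfk k).1, (hfk k).2.1⟩,
    ?_, fun k => (ht0S (htk_mem k)).2, ?_, ?_⟩
  · intro i j hij
    rw [hIcc, hIcc]
    exact ht0disj (htk_mem i) (htk_mem j)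
      (fun h => hij (he.1 (Subtype.ext h)))
  · rw [hUnion]
    refine measure_mono_null (fun x hx => ?_)
      (measure_union_null hScompl ht0null)
    by_cases h : x ∈ S
    · exact Or.inr ⟨h, hx.2⟩
    · exact Or.inl ⟨hx.1, h⟩
  · intro vε hvε1 hvε2
    set I : ℕ → Set ℝ := fun k => Icc (tk k - rk k) (tk k + rk k) with hI_def
    have hdisj : Pairwise (Function.onFun Disjoint I) := by
      intro i j hij
      simp only [hI_def, Function.onFun, hIcc]
      exact ht0disj (htk_mem i) (htk_mem j) (fun h => hij (he.1 (Subtype.ext h)))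
    have hIsub : ∀ k, I k ⊆ Ioi (0:ℝ) := by
      intro k x hx
      have h1 := (hfk k).1; have h2 := (hfk k).2.1
      have := hx.1
      simp only [mem_Ioi]; linarith
    have hDnull : volume (Ioi (0:ℝ) \ ⋃ k, I k) = 0 := by
      rw [hI_def]
      refine measure_mono_null (fun x hx => ?_) (measure_union_null hScompl ht0null)
      rw [← hUnion] at *
      by_cases h : x ∈ S
      · exact Or.inr ⟨h, hx.2⟩
      · exact Or.inl ⟨hx.1, h⟩
    set g : ℝ → ENNReal := fun s => ENNReal.ofReal (ε' * (1 + s^2)⁻¹) with hg_def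
    have step3 : ∀ k, (∫⁻ s in I k, (‖v s - vε s‖₊ : ENNReal) ∂volume)
        ≤ ∫⁻ s in I k, g s ∂volume := by
      intro k
      have h1 : (∫⁻ s in I k, (‖v s - vε s‖₊ : ENNReal) ∂volume)
          = ∫⁻ s in I k, (‖v s - v (tk k)‖₊ : ENNReal) ∂volume := by
        refine setLIntegral_congr_fun measurableSet_Icc (fun s hs => ?_)
        rw [hvε1 k s hs]
      have hint : IntegrableOn (fun s => ‖v s - v (tk k)‖) (I k) volume :=
        ((hv _ (hIsub k) isCompact_Icc).sub
          (integrableOn_const (by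
            rw [hI_def, Real.volume_Icc]; exact ENNReal.ofReal_ne_top))).norm
      have h2 : (∫⁻ s in I k, (‖v s - v (tk k)‖₊ : ENNReal) ∂volume)
          = ENNReal.ofReal (∫ s in I k, ‖v s - v (tk k)‖ ∂volume) := by
        rw [ofReal_integral_eq_lintegral_ofReal hint (ae_of_all _ fun s => norm_nonneg _)]
        simp_rw [ofReal_norm, enorm_eq_nnnorm]
      have h3 : ENNReal.ofReal (∫ s in I k, ‖v s - v (tk k)‖ ∂volume)
          ≤ ENNReal.ofReal (ε' * (1 + (2 * tk k)^2)⁻¹ * (2 * rk k)) :=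
        ENNReal.ofReal_le_ofReal (hfk k).2.2
      have h4 : ENNReal.ofReal (ε' * (1 + (2 * tk k)^2)⁻¹ * (2 * rk k))
          = ENNReal.ofReal (ε' * (1 + (2 * tk k)^2)⁻¹) * volume (I k) := by
        rw [hI_def, Real.volume_Icc, ENNReal.ofReal_mul (by positivity)]
        ring_nf
      have h5 : ENNReal.ofReal (ε' * (1 + (2 * tk k)^2)⁻¹) * volume (I k)
          ≤ ∫⁻ s in I k, g s ∂volume := by
        rw [← setLIntegral_const (I k) _]
        refine setLIntegral_mono' measurableSet_Icc (fun s hs => ?_)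
        refine ENNReal.ofReal_le_ofReal ?_
        refine mul_le_mul_of_nonneg_left ?_ hε'.le
        have h6 := (hfk k).1; have h7 := (hfk k).2.1
        have h8 := hs.1; have h9 := hs.2
        refine inv_anti₀ (by positivity) (by nlinarith)
      calc (∫⁻ s in I k, (‖v s - vε s‖₊ : ENNReal) ∂volume)
          = ENNReal.ofReal (∫ s in I k, ‖v s - v (tk k)‖ ∂volume) := by rw [h1, h2]
        _ ≤ _ := le_trans h3 (le_of_eq h4)
        _ ≤ _ := h5
    have hgtot : (∫⁻ s, g s ∂volume) = ENNReal.ofReal ε := by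
      rw [hg_def]
      have hgi : Integrable (fun s : ℝ => ε' * (1 + s^2)⁻¹) volume :=
        integrable_inv_one_add_sq.const_mul ε'
      rw [← ofReal_integral_eq_lintegral_ofReal hgi
        (ae_of_all _ fun s => by positivity)]
      rw [integral_const_mul, integral_univ_inv_one_add_sq, hε'_def,
        div_mul_cancel₀ _ Real.pi_ne_zero]
    calc (∫⁻ s in Ioi (0:ℝ), (‖v s - vε s‖₊ : ENNReal) ∂volume)
        ≤ ∫⁻ s in (⋃ k, I k) ∪ (Ioi 0 \ ⋃ k, I k), (‖v s - vε s‖₊ : ENNReal) ∂volume := by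
          refine lintegral_mono_set (fun x hx => ?_)
          by_cases h : x ∈ ⋃ k, I k
          · exact Or.inl h
          · exact Or.inr ⟨hx, h⟩
      _ ≤ (∫⁻ s in (⋃ k, I k), (‖v s - vε s‖₊ : ENNReal) ∂volume)
          + ∫⁻ s in (Ioi 0 \ ⋃ k, I k), (‖v s - vε s‖₊ : ENNReal) ∂volume :=
          lintegral_union_le _ _ _
      _ = ∫⁻ s in (⋃ k, I k), (‖v s - vε s‖₊ : ENNReal) ∂volume := by
          rw [setLIntegral_measure_zero _ _ hDnull, add_zero]
      _ = ∑' k, ∫⁻ s in I k, (‖v s - vε s‖₊ : ENNReal) ∂volume :=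
          lintegral_iUnion (fun _ => measurableSet_Icc) hdisj _
      _ ≤ ∑' k, ∫⁻ s in I k, g s ∂volume := ENNReal.tsum_le_tsum step3
      _ = ∫⁻ s in (⋃ k, I k), g s ∂volume :=
          (lintegral_iUnion (fun _ => measurableSet_Icc) hdisj _).symm
      _ ≤ ∫⁻ s, g s ∂volume := setLIntegral_le_lintegral _ _
      _ = ENNReal.ofReal ε := hgtot
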